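/- Let G be a connected graph with a shortest path v_0,...,v_t of eccentricity k. Let r be any vertex, x a vertex maximizing d(r,x), and let v_i, v_j be vertices of the path with d(r,v_i) ≤ k and d(x,v_j) ≤ k. Then d(v_i,v_t) - 3k ≤ d(v_i,v_j) and d(v_i,v_0) - 3k ≤ d(v_i,v_j); consequently v_j is at distance at most 3k from v_0 or from v_t. -/
import Mathlib


open SimpleGraph

variable {V : Type*}

/-- Distance from a vertex `x` to (the support of) a walk `p`. -/
noncomputable def walkDist (G : SimpleGraph V) {u v : V} (x : V) (p : G.Walk u v) : ℕ :=
  sInf {n | ∃ w ∈ p.support, G.dist x w = n}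

/-- A walk is a shortest path when its length equals the distance between its ends. -/
noncomputable def IsShortestPath (G : SimpleGraph V) {u v : V} (p : G.Walk u v) : Prop :=
  p.length = G.dist u v

/-- Eccentricity of a walk: the largest distance from any vertex to the walk. -/
noncomputable def walkEcc [Fintype V] (G : SimpleGraph V) {u v : V} (p : G.Walk u v) : ℕ :=
  sSup {n | ∃ x : V, walkDist G x p = n}

/-- A diameter: a shortest path of maximum length among all distances. -/
noncomputable def IsDiameter [Fintype V] (G : SimpleGraph V) {u v : V} (p : G.Walk u v) : Prop :=
  IsShortestPath G p ∧ ∀ a b : V, G.dist a b ≤ p.length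

/-- `k(G)`: minimum eccentricity over all shortest paths. -/
noncomputable def minK [Fintype V] (G : SimpleGraph V) : ℕ :=
  sInf {n | ∃ (u v : V) (p : G.Walk u v), IsShortestPath G p ∧ walkEcc G p = n}

/-- `l(G)`: minimum eccentricity over all diameters. -/
noncomputable def minL [Fintype V] (G : SimpleGraph V) : ℕ :=
  sInf {n | ∃ (u v : V) (p : G.Walk u v), IsDiameter G p ∧ walkEcc G p = n}

/-- `s(G)`: maximum eccentricity over all diameters. -/
noncomputable def maxS [Fintype V] (G : SimpleGraph V) : ℕ :=
  sSup {n | ∃ (u v : V) (p : G.Walk u v), IsDiameter G p ∧ walkEcc G p = n}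



lemma auxA (G : SimpleGraph V) (hG : G.Connected) : ∀ {u v : V} (p : G.Walk u v) (b : ℕ),
    G.dist u (p.getVert b) ≤ b := by
  intro u v p
  induction p with
  | nil => intro b; simp [SimpleGraph.Walk.getVert, SimpleGraph.dist_self]
  | @cons u w v h q ih =>
    intro b
    cases b with
    | zero => simp [SimpleGraph.Walk.getVert_zero]
    | succ b =>
      rw [SimpleGraph.Walk.getVert_cons_succ]
      calc G.dist u (q.getVert b) ≤ G.dist u w + G.dist w (q.getVert b) :=
            hG.dist_triangle
        _ ≤ 1 + b := by
            have h1 : G.dist u w ≤ 1 := by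
              simpa using SimpleGraph.dist_le h.toWalk
            exact Nat.add_le_add h1 (ih b)
        _ = b + 1 := Nat.add_comm _ _

lemma auxB (G : SimpleGraph V) (hG : G.Connected) : ∀ {u v : V} (p : G.Walk u v) (a b : ℕ), a ≤ b →
    G.dist (p.getVert a) (p.getVert b) ≤ b - a := by
  intro u v p
  induction p with
  | nil => intro a b _; simp [SimpleGraph.Walk.getVert, SimpleGraph.dist_self]
  | @cons u w v h q ih =>
    intro a b hab
    cases a with
    | zero => simpa using auxA G hG (Walk.cons h q) b
    | succ a =>
      cases b with
      | zero => omega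
      | succ b =>
        rw [SimpleGraph.Walk.getVert_cons_succ, SimpleGraph.Walk.getVert_cons_succ]
        simpa using ih a b (by omega)

lemma auxC (G : SimpleGraph V) (hG : G.Connected) {u v : V} (p : G.Walk u v)
    (hP : IsShortestPath G p) (a b : ℕ) (hab : a ≤ b) (hb : b ≤ p.length) :
    G.dist (p.getVert a) (p.getVert b) = b - a := by
  have h1 := auxB G hG p a b hab
  have h2 := auxA G hG p a
  have h3 : G.dist (p.getVert b) v ≤ p.length - b := by
    have := auxB G hG p b p.length hb
    rwa [p.getVert_length] at this
  have htri : G.dist u v ≤ G.dist u (p.getVert a) + (G.dist (p.getVert a) (p.getVert b)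
      + G.dist (p.getVert b) v) :=
    le_trans hG.dist_triangle (by exact Nat.add_le_add_left hG.dist_triangle _)
  rw [← hP] at htri
  omega

theorem stmt4pf [Fintype V] (G : SimpleGraph V) (hG : G.Connected)
    {v0 vt : V} (P : G.Walk v0 vt) (hP : IsShortestPath G P) (k : ℕ)
    (hecc : ∀ z : V, walkDist G z P ≤ k)
    (r x : V) (hx : ∀ w : V, G.dist r w ≤ G.dist r x)
    (i j : ℕ) (hi : i ≤ P.length) (hj : j ≤ P.length)
    (hri : G.dist r (P.getVert i) ≤ k) (hxj : G.dist x (P.getVert j) ≤ k) :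
    G.dist (P.getVert i) vt ≤ G.dist (P.getVert i) (P.getVert j) + 3 * k ∧
    G.dist (P.getVert i) v0 ≤ G.dist (P.getVert i) (P.getVert j) + 3 * k ∧
    (G.dist (P.getVert j) v0 ≤ 3 * k ∨ G.dist (P.getVert j) vt ≤ 3 * k) := by
  set vi := P.getVert i with hvi
  set vj := P.getVert j with hvj
  have hrx : G.dist r x ≤ k + (G.dist vi vj + k) := by
    calc G.dist r x ≤ G.dist r vi + G.dist vi x := hG.dist_triangle
      _ ≤ G.dist r vi + (G.dist vi vj + G.dist vj x) :=
          Nat.add_le_add_left hG.dist_triangle _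
      _ ≤ k + (G.dist vi vj + k) := by
          have : G.dist vj x ≤ k := by rw [SimpleGraph.dist_comm]; exact hxj
          omega
  have key : ∀ w : V, G.dist vi w ≤ G.dist vi vj + 3 * k := by
    intro w
    calc G.dist vi w ≤ G.dist vi r + G.dist r w := hG.dist_triangle
      _ ≤ G.dist vi r + G.dist r x := Nat.add_le_add_left (hx w) _
      _ ≤ k + (k + (G.dist vi vj + k)) := by
          have : G.dist vi r ≤ k := by rw [SimpleGraph.dist_comm]; exact hri
          omega
      _ = G.dist vi vj + 3 * k := by ring
  refine ⟨key vt, key v0, ?_⟩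
  rcases le_or_gt i j with hij | hij
  · right
    have e1 : G.dist vi vj = j - i := auxC G hG P hP i j hij hj
    have e2 : G.dist vj vt = P.length - j := by
      have := auxC G hG P hP j P.length hj le_rfl
      rwa [P.getVert_length] at this
    have e3 : G.dist vi vt = P.length - i := by
      have := auxC G hG P hP i P.length hi le_rfl
      rwa [P.getVert_length] at this
    have h1 := key vt
    omega
  · left
    have e1 : G.dist vi vj = i - j := by
      rw [SimpleGraph.dist_comm]; exact auxC G hG P hP j i hij.le hi
    have e2 : G.dist vj v0 = j := by
      rw [SimpleGraph.dist_comm]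
      have := auxC G hG P hP 0 j (Nat.zero_le _) hj
      rwa [P.getVert_zero] at this
    have e3 : G.dist vi v0 = i := by
      rw [SimpleGraph.dist_comm]
      have := auxC G hG P hP 0 i (Nat.zero_le _) hi
      rwa [P.getVert_zero] at this
    have h1 := key v0
    omega

theorem stmt4 [Fintype V] (G : SimpleGraph V) (hG : G.Connected)
    {v0 vt : V} (P : G.Walk v0 vt) (hP : IsShortestPath G P) (k : ℕ)
    (hecc : ∀ z : V, walkDist G z P ≤ k)
    (r x : V) (hx : ∀ w : V, G.dist r w ≤ G.dist r x)
    (i j : ℕ) (hi : i ≤ P.length) (hj : j ≤ P.length)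
    (hri : G.dist r (P.getVert i) ≤ k) (hxj : G.dist x (P.getVert j) ≤ k) :
    G.dist (P.getVert i) vt ≤ G.dist (P.getVert i) (P.getVert j) + 3 * k ∧
    G.dist (P.getVert i) v0 ≤ G.dist (P.getVert i) (P.getVert j) + 3 * k ∧
    (G.dist (P.getVert j) v0 ≤ 3 * k ∨ G.dist (P.getVert j) vt ≤ 3 * k) :=
  stmt4pf G hG P hP k hecc r x hx i j hi hj hri hxj
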